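/- Let R be a finite open random cover of E and Q a random cover of E. Then the function ω ↦ N(R | Q)(ω) is measurable on Ω. -/

import Mathlib

open MeasureTheory Set Filter Topology
open scoped ENNReal

namespace RelTail

variable {Ω W : Type*}

/-- The fiber over `ω` of a subset of a product space. -/
def fib (E : Set (Ω × W)) (ω : Ω) : Set W := {x | (ω, x) ∈ E}

/-- Minimal cardinality of a subfamily of the cover `R` whose fibers at `ω` cover the
fiber of `S` at `ω` (with the convention that the empty set needs one element). -/
noncomputable def coverNum (S : Set (Ω × W)) (R : Set (Set (Ω × W))) (ω : Ω) : ℕ :=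
  max 1 (sInf {n : ℕ | ∃ F : Finset (Set (Ω × W)), ↑F ⊆ R ∧ F.card = n ∧
    fib S ω ⊆ ⋃ u ∈ F, fib u ω})

/-- `N(R | Q)(ω) = max_{q ∈ Q} N(q, R)(ω)`. -/
noncomputable def relCoverNum (R Q : Set (Set (Ω × W))) (ω : Ω) : ℕ :=
  ⨆ q ∈ Q, coverNum q R ω

section Meas
variable [MeasurableSpace Ω] [MeasurableSpace W]

/-- A (finite or countable) random cover of `E`. -/
def IsRandomCover (E : Set (Ω × W)) (Q : Set (Set (Ω × W))) : Prop :=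
  Q.Countable ∧ (∀ q ∈ Q, MeasurableSet q) ∧ (∀ q ∈ Q, q ⊆ E) ∧
    ∀ ω, fib E ω ⊆ ⋃ q ∈ Q, fib q ω

/-- An open random cover: a random cover whose fibers are (a.e.) open in the fibers of `E`. -/
def IsOpenRandomCover [TopologicalSpace W] (P : Measure Ω) (E : Set (Ω × W))
    (Q : Set (Set (Ω × W))) : Prop :=
  IsRandomCover E Q ∧
    ∀ q ∈ Q, ∀ᵐ ω ∂P, ∃ U : Set W, IsOpen U ∧ fib q ω = U ∩ fib E ω

end Meas

/-- The join `⋁_{i<n} (Γ^i)^{-1} Q` of a cover (or partition). -/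
def iterJoin {Z : Type*} (Γ : Z → Z) (Q : Set (Set Z)) (n : ℕ) : Set (Set Z) :=
  {s | ∃ f : ℕ → Set Z, (∀ i, f i ∈ Q) ∧ s = ⋂ i ∈ Finset.range n, (Γ^[i]) ⁻¹' (f i)}

/-- `log N(R^{(n)} | Q^{(n)})(ω)`. -/
noncomputable def iterCoverLog (Θ : Ω × W → Ω × W) (R Q : Set (Set (Ω × W))) (n : ℕ)
    (ω : Ω) : ℝ :=
  Real.log (relCoverNum (iterJoin Θ R n) (iterJoin Θ Q n) ω)

/-- The relative tail entropy `h_Θ(R|Q)` of an open random cover `R` w.r.t. a random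
cover `Q`, as a limit (limsup) of `(1/n) ∫ log N(R^{(n)}|Q^{(n)}) dP`. -/
noncomputable def relCoverEnt [MeasurableSpace Ω] (P : Measure Ω) (Θ : Ω × W → Ω × W)
    (R Q : Set (Set (Ω × W))) : ℝ≥0∞ :=
  Filter.atTop.limsup fun n : ℕ => ENNReal.ofReal ((∫ ω, iterCoverLog Θ R Q n ω ∂P) / n)

/-- `h(Θ|Q)`: supremum over all open random covers `R` of `h_Θ(R|Q)`. -/
noncomputable def condTailEnt [MeasurableSpace Ω] [MeasurableSpace W] [TopologicalSpace W]
    (P : Measure Ω) (E : Set (Ω × W)) (Θ : Ω × W → Ω × W) (Q : Set (Set (Ω × W))) : ℝ≥0∞ :=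
  ⨆ R ∈ {R | IsOpenRandomCover P E R}, relCoverEnt P Θ R Q

/-- The relative tail entropy `h*(Θ)`: infimum over all random covers `Q` of `h(Θ|Q)`. -/
noncomputable def tailEnt [MeasurableSpace Ω] [MeasurableSpace W] [TopologicalSpace W]
    (P : Measure Ω) (E : Set (Ω × W)) (Θ : Ω × W → Ω × W) : ℝ≥0∞ :=
  ⨅ Q ∈ {Q | IsRandomCover E Q}, condTailEnt P E Θ Q

/-- The skew product transformation of a bundle RDS. -/
def skew (ϑ : Ω → Ω) (T : Ω → W → W) : Ω × W → Ω × W := fun p => (ϑ p.1, T p.1 p.2)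

/-- A continuous bundle random dynamical system over `(Ω, P, ϑ)` on `E`. -/
structure IsBundleRDS [MeasurableSpace Ω] [MeasurableSpace W] [TopologicalSpace W]
    (P : Measure Ω) (ϑ : Ω → Ω) (E : Set (Ω × W)) (T : Ω → W → W) : Prop where
  measurePreserving : MeasurePreserving ϑ P P
  measurable : Measurable fun p : Ω × W => T p.1 p.2
  mapsTo : ∀ ω, MapsTo (T ω) (fib E ω) (fib E (ϑ ω))
  continuousOn : ∀ᵐ ω ∂P, ContinuousOn (T ω) (fib E ω)

/-- A finite or countable measurable partition of a set `E`. -/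
def IsCountablePartition {Z : Type*} [MeasurableSpace Z] (E : Set Z) (R : Set (Set Z)) : Prop :=
  R.Countable ∧ (∀ s ∈ R, MeasurableSet s) ∧ (∀ s ∈ R, s ⊆ E) ∧
    R.PairwiseDisjoint id ∧ ⋃₀ R = E

/-- The conditional entropy `H_μ(R | m)` of a countable partition `R` given a
sub-σ-algebra `m`, via conditional expectations. -/
noncomputable def partCondEntropy {Z : Type*} (m : MeasurableSpace Z) [MeasurableSpace Z]
    (μ : Measure Z) (R : Set (Set Z)) : ℝ≥0∞ :=
  ∑' r : R, ENNReal.ofReal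
    (∫ z, Real.negMulLog ((μ[(r : Set Z).indicator (fun _ => (1 : ℝ)) | m]) z) ∂μ)

/-- The relative entropy `h_μ(R | m)` of the transformation `Γ` with respect to a
partition `R`, given the sub-σ-algebra `m`. -/
noncomputable def relEntPart {Z : Type*} (m : MeasurableSpace Z) [MeasurableSpace Z]
    (μ : Measure Z) (Γ : Z → Z) (R : Set (Set Z)) : ℝ≥0∞ :=
  Filter.atTop.limsup fun n : ℕ => partCondEntropy m μ (iterJoin Γ R n) / (n : ℝ≥0∞)

/-- The relative entropy `h_μ(Γ | m)` given the sub-σ-algebra `m`: supremum over all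
countable measurable partitions of `E` of finite conditional entropy. -/
noncomputable def relEnt {Z : Type*} (m : MeasurableSpace Z) [MeasurableSpace Z]
    (μ : Measure Z) (Γ : Z → Z) (E : Set Z) : ℝ≥0∞ :=
  ⨆ R ∈ {R | IsCountablePartition E R ∧ partCondEntropy m μ R ≠ ∞}, relEntPart m μ Γ R

/-- The fiberwise boundary `{(ω,x) : x ∈ ∂(R(ω))}` of a subset of a product space. -/
def fibFrontier [TopologicalSpace W] (R : Set (Ω × W)) : Set (Ω × W) :=
  {p | p.2 ∈ frontier (fib R p.1)}

/-- The sub-σ-algebra of `Ω × W₁ × W₂` generated by the first two coordinates,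
i.e. the σ-algebra `{(A × W₂) ∩ ⬝ : A ∈ F × B}`. -/
def firstPairSigma (Ω W₁ W₂ : Type*) [MeasurableSpace Ω] [MeasurableSpace W₁] :
    MeasurableSpace (Ω × W₁ × W₂) :=
  MeasurableSpace.comap (fun p : Ω × W₁ × W₂ => (p.1, p.2.1)) inferInstance

/-- The defect of upper semi-continuity of `f` at `m` relative to the set `S`. -/
noncomputable def uscDefect {M : Type*} [TopologicalSpace M] (f : M → ℝ≥0∞) (S : Set M)
    (m : M) : ℝ≥0∞ :=
  if f m ≠ ∞ then Filter.limsup f (𝓝[S] m) - f m else ∞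

/-- The factor (extension) transformation `(ω, y) ↦ (ω, π_ω y)`. -/
def factorMap {Y X : Type*} (πf : Ω → Y → X) : Ω × Y → Ω × X :=
  fun p => (p.1, πf p.1 p.2)

/-- `T` on `E` is a factor of `S` on `G` via the family `π_ω`. -/
structure IsFactor {Ω X Y : Type*} [MeasurableSpace Ω] [MeasurableSpace X] [MeasurableSpace Y]
    [TopologicalSpace X] [TopologicalSpace Y] (ϑ : Ω → Ω) (E : Set (Ω × X)) (G : Set (Ω × Y))
    (T : Ω → X → X) (S : Ω → Y → Y) (πf : Ω → Y → X) : Prop where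
  measurable : Measurable fun p : Ω × Y => πf p.1 p.2
  mapsTo : ∀ ω, MapsTo (πf ω) (fib G ω) (fib E ω)
  surjOn : ∀ ω, SurjOn (πf ω) (fib G ω) (fib E ω)
  continuousOn : ∀ ω, ContinuousOn (πf ω) (fib G ω)
  semiconj : ∀ ω, ∀ y ∈ fib G ω, πf (ϑ ω) (S ω y) = T ω (πf ω y)

section Capacity

variable {C : Type*} [TopologicalSpace C] [T2Space C] [PolishSpace C]
  [MeasurableSpace C] [BorelSpace C]

lemma exists_isCompact_subset_analyticSet (μ : Measure C) [IsFiniteMeasure μ]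
    {A : Set C} (hA : AnalyticSet A) {ε : ℝ≥0∞} (hε : ε ≠ 0) :
    ∃ K : Set C, IsCompact K ∧ K ⊆ A ∧ μ A ≤ μ K + ε := by
  rcases eq_or_ne (μ A) 0 with h0 | h0
  · exact ⟨∅, isCompact_empty, empty_subset _, by simp [h0]⟩
  rw [AnalyticSet] at hA
  rcases hA with rfl | ⟨f, hf, hfr⟩
  · simp at h0
  set M : (ℕ → ℕ) → ℕ → Set (ℕ → ℕ) := fun v k => {x | ∀ i < k, x i ≤ v i} with hM
  have base : μ A - ε < μ (f '' M (fun _ => 0) 0) := by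
    have h1 : M (fun _ => 0) 0 = univ := by ext x; simp [hM]
    rw [h1, image_univ, hfr]
    exact ENNReal.sub_lt_self (measure_ne_top _ _) h0 hε
  have step : ∀ (k : ℕ) (v : ℕ → ℕ), μ A - ε < μ (f '' M v k) →
      ∃ m : ℕ, μ A - ε < μ (f '' M (Function.update v k m) (k + 1)) := by
    intro k v hv
    have hM' : ∀ m, M (Function.update v k m) (k + 1) = M v k ∩ {x | x k ≤ m} := by
      intro m; ext x
      simp only [hM, mem_setOf_eq, mem_inter_iff]
      constructor
      · intro h
        refine ⟨fun i hi => ?_, ?_⟩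
        · have := h i (hi.trans (Nat.lt_succ_self k))
          rwa [Function.update_of_ne hi.ne] at this
        · have := h k (Nat.lt_succ_self k)
          rwa [Function.update_self] at this
      · rintro ⟨h1, h2⟩ i hi
        rcases Nat.lt_succ_iff_lt_or_eq.1 hi with hik | rfl
        · rw [Function.update_of_ne hik.ne]; exact h1 i hik
        · rwa [Function.update_self]
    have hunion : M v k = ⋃ m : ℕ, (M v k ∩ {x | x k ≤ m}) := by
      ext x
      simp only [mem_iUnion, mem_inter_iff, mem_setOf_eq]
      exact ⟨fun h => ⟨x k, h, le_rfl⟩, fun ⟨m, h, _⟩ => h⟩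
    have hmono : Monotone (fun m : ℕ => f '' (M v k ∩ {x | x k ≤ m})) := by
      intro a b hab
      exact image_mono (inter_subset_inter_right _ fun x hx => le_trans hx hab)
    have hsup : μ (f '' M v k) = ⨆ m : ℕ, μ (f '' (M v k ∩ {x | x k ≤ m})) := by
      rw [← hmono.measure_iUnion, ← image_iUnion, ← hunion]
    rw [hsup] at hv
    obtain ⟨m, hm⟩ := lt_iSup_iff.1 hv
    exact ⟨m, by rw [hM' m]; exact hm⟩
  let u : ∀ k : ℕ, {v : ℕ → ℕ // μ A - ε < μ (f '' M v k)} :=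
    fun k => Nat.rec (motive := fun k => {v : ℕ → ℕ // μ A - ε < μ (f '' M v k)})
      ⟨fun _ => 0, base⟩
      (fun k ih => ⟨Function.update ih.1 k (step k ih.1 ih.2).choose,
        (step k ih.1 ih.2).choose_spec⟩) k
  set n : ℕ → ℕ := fun i => (u (i + 1)).1 i with hn
  have hsucc : ∀ k, (u (k + 1)).1 = Function.update (u k).1 k ((step k (u k).1 (u k).2).choose) :=
    fun k => rfl
  have agree : ∀ k, ∀ i, i < k → (u k).1 i = n i := by
    intro k
    induction k with
    | zero => intro i hi; omega
    | succ k ih =>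
      intro i hi
      rcases eq_or_lt_of_le (Nat.lt_succ_iff.1 hi) with rfl | hik
      · rfl
      · rw [hsucc k, Function.update_of_ne hik.ne, ih i hik]
  have hMn : ∀ k, M (u k).1 k = M n k := by
    intro k; ext x
    simp only [hM, mem_setOf_eq]
    exact forall₂_congr fun i hi => by rw [agree k i hi]
  have hInv : ∀ k, μ A - ε < μ (f '' M n k) := by
    intro k
    have := (u k).2
    rwa [hMn k] at this
  set L : Set (ℕ → ℕ) := {x | ∀ i, x i ≤ n i} with hL
  have hLc : IsCompact L := by
    have h1 : L = Set.pi univ fun i => Set.Iic (n i) := by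
      ext x; simp [hL, Set.pi]
    rw [h1]
    exact isCompact_univ_pi fun i => (Set.finite_Iic (n i)).isCompact
  refine ⟨f '' L, hLc.image hf, by rw [← hfr]; exact image_subset_range f L, ?_⟩
  set Cl : ℕ → Set C := fun k => closure (f '' M n k) with hCl
  have hanti : Antitone Cl := by
    intro a b hab
    exact closure_mono (image_mono fun x hx i hi => hx i (lt_of_lt_of_le hi hab))
  have hsub : ⋂ k, Cl k ⊆ f '' L := by
    intro y hy
    obtain ⟨B, hB⟩ := (𝓝 y).exists_antitone_basis
    have hz : ∀ k : ℕ, ∃ x, x ∈ M n k ∧ f x ∈ B k := by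
      intro k
      have hyk : y ∈ closure (f '' M n k) := mem_iInter.1 hy k
      rcases mem_closure_iff_nhds.1 hyk (B k) (hB.1.mem_of_mem trivial) with ⟨z, hz1, hz2⟩
      rcases hz2 with ⟨x, hx, rfl⟩
      exact ⟨x, hx, hz1⟩
    choose x hxM hxB using hz
    have hfx : Tendsto (fun k => f (x k)) atTop (𝓝 y) := hB.tendsto hxB
    set m : ℕ → ℕ := fun i => max (n i) ((Finset.range (i + 1)).sup fun k => x k i) with hm
    have hxm : ∀ k i, x k i ≤ m i := by
      intro k i
      rcases lt_or_ge i k with hik | hik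
      · exact le_max_of_le_left (hxM k i hik)
      · exact le_max_of_le_right (Finset.le_sup (f := fun k => x k i) (Finset.mem_range.2 (Nat.lt_succ_of_le hik)))
    have hcomp : IsCompact {z : ℕ → ℕ | ∀ i, z i ≤ m i} := by
      have h1 : {z : ℕ → ℕ | ∀ i, z i ≤ m i} = Set.pi univ fun i => Set.Iic (m i) := by
        ext z; simp [Set.pi]
      rw [h1]
      exact isCompact_univ_pi fun i => (Set.finite_Iic (m i)).isCompact
    obtain ⟨a, ha, φ, hφ, hconv⟩ := hcomp.isSeqCompact fun k => fun i => hxm k i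
    have haL : a ∈ L := by
      intro i
      have hcont : Tendsto (fun j => x (φ j) i) atTop (𝓝 (a i)) :=
        ((continuous_apply i).tendsto a).comp hconv
      have hsing : ({a i} : Set ℕ) ∈ 𝓝 (a i) := (isOpen_discrete _).mem_nhds rfl
      have hev : ∀ᶠ j in atTop, x (φ j) i ∈ ({a i} : Set ℕ) := hcont hsing
      have hev2 : ∀ᶠ j in atTop, i < φ j := hφ.tendsto_atTop.eventually_gt_atTop i
      rcases (hev.and hev2).exists with ⟨j, h1, h2⟩
      have : x (φ j) i = a i := h1
      rw [← this]
      exact hxM (φ j) i h2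
    have hfa : Tendsto (fun j => f (x (φ j))) atTop (𝓝 (f a)) := (hf.tendsto a).comp hconv
    have h2 : Tendsto (fun j => f (x (φ j))) atTop (𝓝 y) := hfx.comp hφ.tendsto_atTop
    exact ⟨a, haL, tendsto_nhds_unique hfa h2⟩
  have hmeas : ∀ k, NullMeasurableSet (Cl k) μ := fun k =>
    isClosed_closure.measurableSet.nullMeasurableSet
  have hiInf : μ (⋂ k, Cl k) = ⨅ k, μ (Cl k) :=
    hanti.directed_ge.measure_iInter hmeas ⟨0, measure_ne_top _ _⟩
  have hlow : μ A - ε ≤ μ (f '' L) := by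
    calc μ A - ε ≤ ⨅ k, μ (Cl k) :=
          le_iInf fun k => (hInv k).le.trans (measure_mono subset_closure)
    _ = μ (⋂ k, Cl k) := hiInf.symm
    _ ≤ μ (f '' L) := measure_mono hsub
  exact tsub_le_iff_right.1 hlow

lemma analyticSet_exists_sandwich (μ : Measure C) [IsFiniteMeasure μ]
    {A : Set C} (hA : AnalyticSet A) :
    ∃ B₁ B₂ : Set C, MeasurableSet B₁ ∧ MeasurableSet B₂ ∧ B₁ ⊆ A ∧ A ⊆ B₂ ∧ μ (B₂ \ B₁) = 0 := by
  have h : ∀ k : ℕ, ∃ K : Set C, IsCompact K ∧ K ⊆ A ∧ μ A ≤ μ K + ((k : ℝ≥0∞) + 1)⁻¹ :=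
    fun k => exists_isCompact_subset_analyticSet μ hA
      (by simp)
  choose K hK1 hK2 hK3 using h
  have hB1m : MeasurableSet (⋃ k, K k) :=
    MeasurableSet.iUnion fun k => (hK1 k).isClosed.measurableSet
  refine ⟨⋃ k, K k, toMeasurable μ A, hB1m, measurableSet_toMeasurable μ A,
    iUnion_subset hK2, subset_toMeasurable μ A, ?_⟩
  have hle : μ (toMeasurable μ A) ≤ μ (⋃ k, K k) := by
    rw [measure_toMeasurable]
    refine ENNReal.le_of_forall_pos_le_add fun δ hδ _ => ?_
    obtain ⟨k, hk⟩ := ENNReal.exists_inv_nat_lt (a := (δ : ℝ≥0∞)) (by exact_mod_cast hδ.ne')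
    calc μ A ≤ μ (K k) + ((k : ℝ≥0∞) + 1)⁻¹ := hK3 k
    _ ≤ μ (⋃ k, K k) + δ := by
        refine add_le_add (measure_mono (subset_iUnion K k)) ?_
        exact le_trans (ENNReal.inv_le_inv.2 (le_add_of_nonneg_right zero_le_one)) hk.le
  have hd : μ (toMeasurable μ A \ ⋃ k, K k) = μ (toMeasurable μ A) - μ (⋃ k, K k) :=
    measure_diff ((iUnion_subset hK2).trans (subset_toMeasurable μ A))
      hB1m.nullMeasurableSet (measure_ne_top _ _)
  rw [hd]
  exact tsub_eq_zero_of_le hle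

end Capacity

section Projection

lemma measurableSet_image_fst_of_complete
    {α X : Type*} [MeasurableSpace α] [MeasurableSpace.CountablyGenerated α]
    [TopologicalSpace X] [PolishSpace X] [MeasurableSpace X] [BorelSpace X]
    (P : Measure α) [IsFiniteMeasure P] (hP : P.IsComplete)
    {s : Set (α × X)} (hs : MeasurableSet s) : MeasurableSet (Prod.fst '' s) := by
  classical
  set φ := MeasurableSpace.mapNatBool α with hφ
  have hφm : Measurable φ := MeasurableSpace.measurable_mapNatBool α
  have hcom : (inferInstance : MeasurableSpace α) ≤
      MeasurableSpace.comap φ inferInstance := by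
    conv_lhs => rw [← MeasurableSpace.generateFrom_natGeneratingSequence α]
    refine MeasurableSpace.generateFrom_le ?_
    rintro _ ⟨n, rfl⟩
    rw [MeasurableSpace.measurableSet_comap]
    have hpi : MeasurableSet {y : ℕ → Bool | y n = true} := by
      have h2 : {y : ℕ → Bool | y n = true} = (fun y : ℕ → Bool => y n) ⁻¹' {true} := by
        ext y; simp
      rw [h2]; exact measurable_pi_apply n (measurableSet_singleton true)
    refine ⟨{y | y n = true}, hpi, ?_⟩
    ext x
    simp [hφ, MeasurableSpace.mapNatBool]
  set Φ : α × X → (ℕ → Bool) × X := fun p => (φ p.1, p.2) with hΦ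
  have hΦm : Measurable Φ := (hφm.comp measurable_fst).prodMk measurable_snd
  have hprod : (inferInstance : MeasurableSpace (α × X)) ≤
      MeasurableSpace.comap Φ inferInstance := by
    have h1 : (inferInstance : MeasurableSpace (α × X)) =
        MeasurableSpace.comap Prod.fst inferInstance ⊔
          MeasurableSpace.comap Prod.snd inferInstance := rfl
    rw [h1]
    refine sup_le ?_ ?_
    · calc MeasurableSpace.comap Prod.fst (inferInstance : MeasurableSpace α)
          ≤ MeasurableSpace.comap Prod.fst (MeasurableSpace.comap φ inferInstance) :=
            MeasurableSpace.comap_mono hcom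
      _ = MeasurableSpace.comap Φ (MeasurableSpace.comap Prod.fst inferInstance) := by
            rw [MeasurableSpace.comap_comp, MeasurableSpace.comap_comp]; rfl
      _ ≤ MeasurableSpace.comap Φ inferInstance :=
            MeasurableSpace.comap_mono le_sup_left
    · calc MeasurableSpace.comap Prod.snd (inferInstance : MeasurableSpace X)
          = MeasurableSpace.comap Φ (MeasurableSpace.comap Prod.snd inferInstance) := by
            rw [MeasurableSpace.comap_comp]; rfl
      _ ≤ MeasurableSpace.comap Φ inferInstance :=
            MeasurableSpace.comap_mono le_sup_right
  obtain ⟨t, ht, hts⟩ := MeasurableSpace.measurableSet_comap.1 (hprod _ hs)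
  have key : Prod.fst '' s = φ ⁻¹' (Prod.fst '' t) := by
    ext ω
    constructor
    · rintro ⟨⟨ω', x⟩, hmem, rfl⟩
      refine ⟨(φ ω', x), ?_, rfl⟩
      rw [← hts] at hmem
      exact hmem
    · rintro ⟨⟨c, x⟩, hmem, h1⟩
      refine ⟨(ω, x), ?_, rfl⟩
      rw [← hts]
      show (φ ω, x) ∈ t
      have : c = φ ω := h1
      rwa [this] at hmem
  have hAnal : AnalyticSet (Prod.fst '' t) := ht.analyticSet_image measurable_fst
  haveI : PolishSpace (ℕ → Bool) := {}
  obtain ⟨B₁, B₂, hB₁, hB₂, hB₁A, hAB₂, hzero⟩ :=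
    analyticSet_exists_sandwich (P.map φ) hAnal
  have hnull : P (φ ⁻¹' B₂ \ φ ⁻¹' B₁) = 0 := by
    rw [← preimage_diff, ← Measure.map_apply hφm (hB₂.diff hB₁)]
    exact hzero
  have hsub2 : Prod.fst '' s \ φ ⁻¹' B₁ ⊆ φ ⁻¹' B₂ \ φ ⁻¹' B₁ := by
    refine diff_subset_diff_left ?_
    rw [key]
    exact preimage_mono hAB₂
  have hmeas2 : MeasurableSet (Prod.fst '' s \ φ ⁻¹' B₁) :=
    hP.out' _ (measure_mono_null hsub2 hnull)
  have hsub1 : φ ⁻¹' B₁ ⊆ Prod.fst '' s := by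
    rw [key]; exact preimage_mono hB₁A
  have hcover : Prod.fst '' s = φ ⁻¹' B₁ ∪ (Prod.fst '' s \ φ ⁻¹' B₁) :=
    (union_diff_cancel hsub1).symm
  rw [hcover]
  exact (hφm hB₁).union hmeas2

end Projection

set_option maxHeartbeats 1000000 in
/-- the function `ω ↦ N(R | Q)(ω)` is measurable. -/
theorem measurable_relCoverNum
    {Ω X : Type*} [MeasurableSpace Ω] [MeasurableSpace.CountablyGenerated Ω]
    [MetricSpace X] [CompactSpace X] [MeasurableSpace X] [BorelSpace X]
    (P : Measure Ω) [IsProbabilityMeasure P] (hP : P.IsComplete)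
    (E : Set (Ω × X)) (hE : MeasurableSet E) (hEc : ∀ ω, IsCompact (fib E ω))
    (R Q : Set (Set (Ω × X))) (hRfin : R.Finite)
    (hR : IsOpenRandomCover P E R) (hQ : IsRandomCover E Q) :
    Measurable fun ω => relCoverNum R Q ω := by
  classical
  obtain ⟨⟨hRcnt, hRmeas, hRsub, hRcov⟩, hRopen⟩ := hR
  obtain ⟨hQcnt, hQmeas, hQsub, hQcov⟩ := hQ
  set K : ℕ := max 1 hRfin.toFinset.card with hK
  -- the full cover always works, so the defining set is nonempty
  have hmem : ∀ q ∈ Q, ∀ ω, hRfin.toFinset.card ∈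
      {n : ℕ | ∃ F : Finset (Set (Ω × X)), ↑F ⊆ R ∧ F.card = n ∧
        fib q ω ⊆ ⋃ u ∈ F, fib u ω} := by
    intro q hq ω
    refine ⟨hRfin.toFinset, by simp, rfl, ?_⟩
    intro x hx
    have hxE : x ∈ fib E ω := hQsub q hq hx
    have hxR := hRcov ω hxE
    simp only [mem_iUnion, exists_prop] at hxR ⊢
    obtain ⟨r, hr, hxr⟩ := hxR
    exact ⟨r, hRfin.mem_toFinset.2 hr, hxr⟩
  -- measurability of covering events, via the measurable projection theorem
  have hAF : ∀ q ∈ Q, ∀ F : Finset (Set (Ω × X)), ↑F ⊆ R →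
      MeasurableSet {ω | fib q ω ⊆ ⋃ u ∈ F, fib u ω} := by
    intro q hq F hF
    have hU : MeasurableSet (⋃ u ∈ F, u) :=
      F.measurableSet_biUnion fun u hu => hRmeas u (hF hu)
    have hsm : MeasurableSet (q \ ⋃ u ∈ F, u) := (hQmeas q hq).diff hU
    have heq : {ω | fib q ω ⊆ ⋃ u ∈ F, fib u ω} =
        (Prod.fst '' (q \ ⋃ u ∈ F, u))ᶜ := by
      ext ω
      simp only [mem_setOf_eq, mem_compl_iff]
      constructor
      · intro h hmem'
        obtain ⟨⟨ω', x⟩, ⟨hq', hnot⟩, rfl⟩ := hmem'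
        refine hnot ?_
        have hx : x ∈ fib q ω' := hq'
        have hxU := h hx
        simp only [mem_iUnion, exists_prop] at hxU ⊢
        obtain ⟨u, hu, hxu⟩ := hxU
        exact ⟨u, hu, hxu⟩
      · intro h x hx
        by_contra hxU
        refine h ⟨(ω, x), ⟨hx, ?_⟩, rfl⟩
        intro hmem'
        refine hxU ?_
        simp only [mem_iUnion, exists_prop] at hmem' ⊢
        obtain ⟨u, hu, hxu⟩ := hmem'
        exact ⟨u, hu, hxu⟩
    rw [heq]
    exact (measurableSet_image_fst_of_complete P hP hsm).compl
  -- sublevel sets of `coverNum` are measurable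
  have hSle : ∀ q ∈ Q, ∀ n : ℕ, MeasurableSet {ω | coverNum q R ω ≤ n} := by
    intro q hq n
    rcases Nat.eq_zero_or_pos n with rfl | hn
    · have h0 : {ω : Ω | coverNum q R ω ≤ 0} = ∅ := by
        ext ω
        simp only [coverNum, mem_setOf_eq, mem_empty_iff_false, iff_false]
        omega
      rw [h0]; exact MeasurableSet.empty
    · have hfin : {F : Finset (Set (Ω × X)) | ↑F ⊆ R ∧ F.card ≤ n}.Finite := by
        have hsub : {F : Finset (Set (Ω × X)) | ↑F ⊆ R ∧ F.card ≤ n} ⊆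
            (fun F : Finset (Set (Ω × X)) => (F : Set (Set (Ω × X)))) ⁻¹'
              {t : Set (Set (Ω × X)) | t ⊆ R} := fun F hF => hF.1
        exact (hRfin.finite_subsets.preimage Finset.coe_injective.injOn).subset hsub
      have heq : {ω | coverNum q R ω ≤ n} =
          ⋃ F ∈ {F : Finset (Set (Ω × X)) | ↑F ⊆ R ∧ F.card ≤ n},
            {ω | fib q ω ⊆ ⋃ u ∈ F, fib u ω} := by
        ext ω
        simp only [coverNum, mem_setOf_eq, mem_iUnion, exists_prop]
        constructor
        · intro h
          have hne : {m : ℕ | ∃ F : Finset (Set (Ω × X)), ↑F ⊆ R ∧ F.card = m ∧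
              fib q ω ⊆ ⋃ u ∈ F, fib u ω}.Nonempty := ⟨_, hmem q hq ω⟩
          obtain ⟨F, hFR, hFcard, hFcov⟩ := Nat.sInf_mem hne
          refine ⟨F, ⟨hFR, ?_⟩, hFcov⟩
          rw [hFcard]
          exact le_trans (le_max_right 1 _) h
        · rintro ⟨F, ⟨hFsub, hFcard⟩, hcov⟩
          have h1 : sInf {m : ℕ | ∃ F : Finset (Set (Ω × X)), ↑F ⊆ R ∧ F.card = m ∧
              fib q ω ⊆ ⋃ u ∈ F, fib u ω} ≤ F.card :=
            Nat.sInf_le ⟨F, hFsub, rfl, hcov⟩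
          exact max_le hn (le_trans h1 hFcard)
      rw [heq]
      exact MeasurableSet.biUnion hfin.countable fun F hF => hAF q hq F hF.1
  -- uniform bound on `coverNum`
  have hbound : ∀ q ∈ Q, ∀ ω, coverNum q R ω ≤ K := by
    intro q hq ω
    rw [coverNum]
    exact max_le (le_max_left _ _)
      (le_trans (Nat.sInf_le (hmem q hq ω)) (le_max_right _ _))
  -- sublevel sets of `relCoverNum` are measurable
  have hFle : ∀ n : ℕ, MeasurableSet {ω | relCoverNum R Q ω ≤ n} := by
    intro n
    have heq : {ω | relCoverNum R Q ω ≤ n} =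
        ⋂ q ∈ Q, {ω | coverNum q R ω ≤ n} := by
      ext ω
      simp only [relCoverNum, mem_setOf_eq, mem_iInter]
      constructor
      · intro h q hq
        refine le_trans ?_ h
        have hb : BddAbove (range fun q : Set (Ω × X) =>
            ⨆ _ : q ∈ Q, coverNum q R ω) := by
          refine ⟨K, ?_⟩
          rintro _ ⟨q', rfl⟩
          show (⨆ _ : q' ∈ Q, coverNum q' R ω) ≤ K
          by_cases hq' : q' ∈ Q
          · haveI : Nonempty (q' ∈ Q) := ⟨hq'⟩
            rw [ciSup_const]
            exact hbound q' hq' ω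
          · haveI : IsEmpty (q' ∈ Q) := ⟨hq'⟩
            rw [ciSup_of_empty]
            exact Nat.zero_le _
        have h1 : coverNum q R ω = ⨆ _ : q ∈ Q, coverNum q R ω := by
          haveI : Nonempty (q ∈ Q) := ⟨hq⟩
          rw [ciSup_const]
        rw [h1]
        exact le_ciSup hb q
      · intro h
        refine ciSup_le' fun q => ciSup_le' fun hq => h q hq
    rw [heq]
    exact MeasurableSet.biInter hQcnt fun q hq => hSle q hq n
  -- conclude
  refine measurable_to_countable' fun n => ?_
  cases n with
  | zero =>
    have h0 : (fun ω => relCoverNum R Q ω) ⁻¹' {0} = {ω | relCoverNum R Q ω ≤ 0} := by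
      ext ω; simp [Nat.le_zero]
    rw [h0]; exact hFle 0
  | succ n =>
    have h1 : (fun ω => relCoverNum R Q ω) ⁻¹' {n + 1} =
        {ω | relCoverNum R Q ω ≤ n + 1} \ {ω | relCoverNum R Q ω ≤ n} := by
      ext ω
      simp only [mem_preimage, mem_singleton_iff, mem_diff, mem_setOf_eq]
      omega
    rw [h1]; exact (hFle (n + 1)).diff (hFle n)

end RelTail
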